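/- For every integer n ≥ 3, the semitotal domination number of the cycle C_n on n vertices equals ⌈2n/5⌉, i.e., γ_t2(C_n) = ⌈2n/5⌉. -/

import Mathlib

open SimpleGraph

/-- `D` is a dominating set of `G`: every vertex not in `D` is adjacent to a vertex of `D`. -/
def IsDomSet {V : Type*} (G : SimpleGraph V) (D : Set V) : Prop :=
  ∀ v, v ∉ D → ∃ u ∈ D, G.Adj u v

/-- `D` is a semitotal dominating set of `G`: it is a dominating set and every vertex of `D`
is within distance 2 from another vertex of `D`. -/
def IsSemitotalDomSet {V : Type*} (G : SimpleGraph V) (D : Set V) : Prop :=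
  IsDomSet G D ∧
    ∀ v ∈ D, ∃ u ∈ D, u ≠ v ∧ (G.Adj u v ∨ ∃ w, G.Adj u w ∧ G.Adj w v)

/-- The semitotal domination number: the minimum cardinality of a semitotal dominating set. -/
noncomputable def semitotalDomNum {V : Type*} (G : SimpleGraph V) [Fintype V] : ℕ :=
  sInf {k | ∃ D : Finset V, IsSemitotalDomSet G ↑D ∧ D.card = k}

/-- The domination number: the minimum cardinality of a dominating set. -/
noncomputable def domNum {V : Type*} (G : SimpleGraph V) [Fintype V] : ℕ :=
  sInf {k | ∃ D : Finset V, IsDomSet G ↑D ∧ D.card = k}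

/-- The number of semitotal dominating sets of cardinality `i`. -/
noncomputable def numSemitotalDomSets {V : Type*} (G : SimpleGraph V) [Fintype V] (i : ℕ) : ℕ :=
  Set.ncard {D : Finset V | IsSemitotalDomSet G ↑D ∧ D.card = i}

/-- The number of dominating sets of cardinality `i`. -/
noncomputable def numDomSets {V : Type*} (G : SimpleGraph V) [Fintype V] (i : ℕ) : ℕ :=
  Set.ncard {D : Finset V | IsDomSet G ↑D ∧ D.card = i}

open Finset Fin.CommRing

private lemma cyc_adj {m : ℕ} (u v : Fin (m+3)) :
    (cycleGraph (m+3)).Adj u v ↔ u = v + 1 ∨ v = u + 1 := by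
  rw [show m + 3 = (m+1) + 2 by omega] at *
  rw [cycleGraph_adj]
  constructor
  · rintro (h | h)
    · left; rw [← h]; ring
    · right; rw [← h]; ring
  · rintro (h | h)
    · left; rw [h]; ring
    · right; rw [h]; ring

private lemma mod5_cases (n : ℕ) : ∃ r k, n % 5 = r ∧ r < 5 ∧ n = 5 * k + r :=
  ⟨n % 5, n / 5, rfl, by omega, by omega⟩

private lemma count5 (n : ℕ) :
    ((Finset.range n).filter (fun i => i % 5 = 0 ∨ i % 5 = 2)).card = (2*n+4)/5 := by
  induction n with
  | zero => simp
  | succ n ih =>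
    rw [Finset.range_add_one, Finset.filter_insert]
    obtain ⟨r, k, hr, hrlt, hn⟩ := mod5_cases n
    by_cases h : n % 5 = 0 ∨ n % 5 = 2
    · rw [if_pos h, Finset.card_insert_of_notMem (by simp), ih]
      subst hn; rw [hr] at h; interval_cases r <;> simp_all <;> omega
    · rw [if_neg h, ih]
      push_neg at h
      subst hn; rw [hr] at h; interval_cases r <;> simp_all <;> omega

private lemma card_fin_filter (n : ℕ) (p : ℕ → Prop) [DecidablePred p] :
    ((Finset.univ : Finset (Fin n)).filter (fun i => p i.val)).card
      = ((Finset.range n).filter p).card := by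
  rw [← Finset.card_image_of_injective _ Fin.val_injective]
  congr 1
  ext a
  simp only [Finset.mem_image, Finset.mem_filter, Finset.mem_univ, true_and, Finset.mem_range]
  constructor
  · rintro ⟨i, hp, rfl⟩; exact ⟨i.isLt, hp⟩
  · rintro ⟨ha, hp⟩; exact ⟨⟨a, ha⟩, hp, rfl⟩

private lemma hval1 {m : ℕ} (a : Fin (m+3)) : (a + 1).val = (a.val + 1) % (m+3) := by
  rw [Fin.val_add]
  congr 1

private lemma adj_of_succ {m : ℕ} {a b : Fin (m+3)}
    (h : a.val + 1 = b.val ∨ (a.val = m + 2 ∧ b.val = 0)) :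
    (cycleGraph (m+3)).Adj a b := by
  rw [cyc_adj]; right
  rw [Fin.ext_iff, hval1]
  rcases h with h | ⟨h1, h2⟩
  · rw [h]; exact (Nat.mod_eq_of_lt b.isLt).symm
  · rw [h1, h2, show m + 2 + 1 = m + 3 by omega, Nat.mod_self]

private lemma upperD (m : ℕ) :
    IsSemitotalDomSet (cycleGraph (m+3))
      ↑((Finset.univ : Finset (Fin (m+3))).filter (fun i => i.val % 5 = 0 ∨ i.val % 5 = 2)) := by
  have hmem : ∀ v : Fin (m+3), v ∈ (↑((Finset.univ : Finset (Fin (m+3))).filter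
      (fun i => i.val % 5 = 0 ∨ i.val % 5 = 2)) : Set (Fin (m+3)))
        ↔ (v.val % 5 = 0 ∨ v.val % 5 = 2) := by
    intro v; simp
  constructor
  · -- dominating
    intro v hv
    rw [hmem] at hv
    push_neg at hv
    obtain ⟨h0, h2⟩ := hv
    have hvlt := v.isLt
    by_cases h4 : v.val % 5 = 4
    · by_cases hlast : v.val = m + 2
      · exact ⟨⟨0, by omega⟩, by rw [hmem]; left; simp,
          (adj_of_succ (Or.inr ⟨hlast, rfl⟩)).symm⟩
      · exact ⟨⟨v.val + 1, by omega⟩, by rw [hmem]; simp only [Fin.val_mk] <;> omega,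
          (adj_of_succ (Or.inl rfl)).symm⟩
    · have hv1 : 1 ≤ v.val := by omega
      exact ⟨⟨v.val - 1, by omega⟩, by rw [hmem]; simp only [Fin.val_mk] <;> omega,
        adj_of_succ (Or.inl (by simp only [Fin.val_mk] <;> omega))⟩
  · -- semitotal
    intro v hv
    rw [hmem] at hv
    have hvlt := v.isLt
    rcases hv with h0 | h2
    · by_cases hbig : v.val + 2 < m + 3
      · refine ⟨⟨v.val + 2, by omega⟩, by rw [hmem]; simp only [Fin.val_mk] <;> omega,
          by simp only [ne_eq, Fin.ext_iff, Fin.val_mk] <;> omega,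
          Or.inr ⟨⟨v.val + 1, by omega⟩, ?_, ?_⟩⟩
        · exact (adj_of_succ (Or.inl (by simp only [Fin.val_mk] <;> omega))).symm
        · exact (adj_of_succ (Or.inl (by simp only [Fin.val_mk] <;> omega))).symm
      · by_cases hl : v.val = m + 2
        · exact ⟨⟨0, by omega⟩, by rw [hmem]; left; simp,
            by simp only [ne_eq, Fin.ext_iff, Fin.val_mk] <;> omega,
            Or.inl (adj_of_succ (Or.inr ⟨hl, rfl⟩)).symm⟩
        · have hl2 : v.val = m + 1 := by omega
          refine ⟨⟨0, by omega⟩, by rw [hmem]; left; simp,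
            by simp only [ne_eq, Fin.ext_iff, Fin.val_mk] <;> omega,
            Or.inr ⟨⟨m + 2, by omega⟩, ?_, ?_⟩⟩
          · exact (adj_of_succ (Or.inr ⟨rfl, rfl⟩)).symm
          · exact (adj_of_succ (Or.inl (by simp only [Fin.val_mk] <;> omega))).symm
    · have hv2 : 2 ≤ v.val := by omega
      refine ⟨⟨v.val - 2, by omega⟩, by rw [hmem]; simp only [Fin.val_mk] <;> omega,
        by simp only [ne_eq, Fin.ext_iff, Fin.val_mk] <;> omega,
        Or.inr ⟨⟨v.val - 1, by omega⟩, ?_, ?_⟩⟩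
      · exact adj_of_succ (Or.inl (by simp only [Fin.val_mk] <;> omega))
      · exact adj_of_succ (Or.inl (by simp only [Fin.val_mk] <;> omega))

private lemma lowerD (m : ℕ) (D : Finset (Fin (m+3))) (hD : IsSemitotalDomSet (cycleGraph (m+3)) ↑D) :
    2 * (m + 3) ≤ 5 * D.card := by
  classical
  obtain ⟨hdom, hsemi⟩ := hD
  have cancel : ∀ (d c : Fin (m+3)), d + c = d → c = 0 := by
    intro d c h
    have h2 : d + c = d + 0 := by rw [h, add_zero]
    exact add_left_cancel h2
  have hone : (1 : Fin (m+3)) ≠ 0 := by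
    have : ((1 : Fin (m+3))).val = 1 := Fin.val_one (m+1)
    intro h
    rw [h, Fin.val_zero] at this
    omega
  have htwo : (1 : Fin (m+3)) + 1 ≠ 0 := by
    have h1 : ((1 : Fin (m+3)) + 1).val = 2 := by
      rw [hval1, Fin.val_one (m+1), Nat.mod_eq_of_lt (by omega)]
    intro h
    rw [h, Fin.val_zero] at h1
    omega
  set f : Fin (m+3) → Fin (m+3) :=
    fun u => if u ∈ D then u else if u + 1 ∈ D then u + 1 else u - 1 with hfdef
  have hfD : ∀ u, f u ∈ D := by
    intro u
    by_cases h1 : u ∈ D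
    · simp [hfdef, h1]
    by_cases h2 : u + 1 ∈ D
    · simp [hfdef, h1, h2]
    · obtain ⟨w, hw, hadj⟩ := hdom u (by simpa using h1)
      rw [cyc_adj] at hadj
      rcases hadj with h | h
      · exact absurd (h ▸ (by simpa using hw)) h2
      · have hw' : w = u - 1 := by rw [h]; ring
        simp only [hfdef, if_neg h1, if_neg h2]
        rw [← hw']
        simpa using hw
  have hfval : ∀ u, f u = u ∨ f u = u + 1 ∨ f u = u - 1 := by
    intro u
    by_cases h1 : u ∈ D
    · left; simp [hfdef, h1]
    by_cases h2 : u + 1 ∈ D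
    · right; left; simp [hfdef, h1, h2]
    · right; right; simp [hfdef, h1, h2]
  have hfiber : ∀ x : Fin (m+3),
      (univ.filter fun u => f u = x) ⊆ {x, x - 1, x + 1} := by
    intro x u hu
    have hu2 : f u = x := (mem_filter.mp hu).2
    simp only [mem_insert, mem_singleton]
    rcases hfval u with h | h | h
    · left; rw [← hu2, h]
    · right; left; rw [← hu2, h]; ring
    · right; right; rw [← hu2, h]; ring
  have pair_le : ∀ a b : Fin (m+3), ({a, b} : Finset (Fin (m+3))).card ≤ 2 :=
    fun a b => (Finset.card_insert_le _ _).trans (by simp)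
  have triple_le : ∀ a b c : Fin (m+3), ({a, b, c} : Finset (Fin (m+3))).card ≤ 3 :=
    fun a b c => (Finset.card_insert_le _ _).trans (Nat.succ_le_succ (pair_le b c))
  have hcard3 : ∀ x : Fin (m+3), (univ.filter fun u => f u = x).card ≤ 3 :=
    fun x => (Finset.card_le_card (hfiber x)).trans (triple_le _ _ _)
  have hsum : m + 3 = ∑ d ∈ D, (univ.filter fun u => f u = d).card := by
    have h := Finset.card_eq_sum_card_fiberwise (fun x (_ : x ∈ (univ : Finset (Fin (m+3)))) => hfD x)
    simpa using h
  -- key analysis of "full" vertices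
  have hkey : ∀ d ∈ D, (univ.filter fun u => f u = d).card = 3 →
      d - 1 - 1 ∈ D ∧ (univ.filter fun u => f u = d - 1 - 1).card ≤ 2 := by
    intro d hd hd3
    have hfull : (univ.filter fun u => f u = d) = {d, d - 1, d + 1} :=
      Finset.eq_of_subset_of_card_le (hfiber d) (by rw [hd3]; exact triple_le _ _ _)
    have hm1 : f (d - 1) = d := by
      have : d - 1 ∈ (univ.filter fun u => f u = d) := by rw [hfull]; simp
      exact (mem_filter.mp this).2
    have hp1 : f (d + 1) = d := by
      have : d + 1 ∈ (univ.filter fun u => f u = d) := by rw [hfull]; simp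
      exact (mem_filter.mp this).2
    have hd1 : d + 1 ∉ D := by
      intro h
      have : f (d + 1) = d + 1 := by simp [hfdef, h]
      rw [hp1] at this
      exact hone (cancel d 1 this.symm)
    have hd2 : d + 1 + 1 ∉ D := by
      intro h
      have : f (d + 1) = d + 1 + 1 := by simp [hfdef, hd1, h]
      rw [hp1] at this
      exact htwo (cancel d (1 + 1) (by rw [← add_assoc]; exact this.symm))
    have hmne : d - 1 ∉ D := by
      intro h
      have : f (d - 1) = d - 1 := by simp [hfdef, h]
      rw [hm1] at this
      have h1 : d + 1 = d := by nth_rewrite 1 [this]; ring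
      exact hone (cancel d 1 h1)
    obtain ⟨u, hu, hne, hcase⟩ := hsemi d (by simpa using hd)
    have huD : u ∈ D := by simpa using hu
    have humem : u = d - 1 - 1 := by
      rcases hcase with hadj | ⟨w, a1, a2⟩
      · rw [cyc_adj] at hadj
        rcases hadj with h | h
        · exact absurd (h ▸ huD) hd1
        · have : u = d - 1 := by rw [h]; ring
          exact absurd (this ▸ huD) hmne
      · rw [cyc_adj] at a1 a2
        rcases a2 with h2 | h2
        · rcases a1 with h1 | h1
          · rw [h2] at h1; exact absurd (h1 ▸ huD) hd2
          · have : u = d := by rw [show u = w - 1 by rw [h1]; ring, h2]; ring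
            exact absurd this hne
        · have hw : w = d - 1 := by rw [h2]; ring
          rcases a1 with h1 | h1
          · have : u = d := by rw [h1, hw]; ring
            exact absurd this hne
          · rw [show u = w - 1 by rw [h1]; ring, hw]
    refine ⟨humem ▸ huD, ?_⟩
    have hsub : (univ.filter fun u => f u = d - 1 - 1) ⊆ {d - 1 - 1, d - 1 - 1 - 1} := by
      intro x hx
      have hx2 : f x = d - 1 - 1 := (mem_filter.mp hx).2
      have hx3 := hfiber (d - 1 - 1) hx
      simp only [mem_insert, mem_singleton] at hx3 ⊢
      rcases hx3 with h | h | h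
      · left; exact h
      · right; exact h
      · exfalso
        have hxd : x = d - 1 := by rw [h]; ring
        rw [hxd, hm1] at hx2
        have : d + (1 + 1) = d := by nth_rewrite 1 [hx2]; ring
        exact htwo (cancel d (1 + 1) this)
    exact (Finset.card_le_card hsub).trans (pair_le _ _)
  set F := D.filter (fun d => (univ.filter fun u => f u = d).card = 3) with hF
  set R := D.filter (fun d => ¬ (univ.filter fun u => f u = d).card = 3) with hR
  have hmap : ∀ d ∈ F, d - 1 - 1 ∈ R := by
    intro d hd
    obtain ⟨hd1, hd2⟩ := mem_filter.mp hd
    obtain ⟨h1, h2⟩ := hkey d hd1 hd2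
    rw [hR, mem_filter]
    exact ⟨h1, (by omega : ¬ (univ.filter fun u => f u = d - 1 - 1).card = 3)⟩
  have hinj : Set.InjOn (fun d => d - 1 - 1) (F : Set (Fin (m+3))) := by
    intro a _ b _ h
    simp only at h
    have : a = a - 1 - 1 + 1 + 1 := by ring
    rw [this, h]; ring
  have hFle : F.card ≤ R.card := Finset.card_le_card_of_injOn _ hmap hinj
  have hsF : ∑ d ∈ F, (univ.filter fun u => f u = d).card ≤ F.card * 3 := by
    have := Finset.sum_le_card_nsmul F (fun d => (univ.filter fun u => f u = d).card) 3
      (fun d _ => hcard3 d)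
    simpa using this
  have hsR : ∑ d ∈ R, (univ.filter fun u => f u = d).card ≤ R.card * 2 := by
    have := Finset.sum_le_card_nsmul R (fun d => (univ.filter fun u => f u = d).card) 2
      (fun d hd => by
        show (univ.filter fun u => f u = d).card ≤ 2
        have h1 := hcard3 d
        have h2 : ¬ (univ.filter fun u => f u = d).card = 3 := (mem_filter.mp hd).2
        omega)
    simpa using this
  have hsplit : ∑ d ∈ F, (univ.filter fun u => f u = d).card
      + ∑ d ∈ R, (univ.filter fun u => f u = d).card
      = ∑ d ∈ D, (univ.filter fun u => f u = d).card :=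
    Finset.sum_filter_add_sum_filter_not D _ _
  have hcards : F.card + R.card = D.card :=
    Finset.card_filter_add_card_filter_not _
  clear_value f
  clear hdom hsemi cancel hone htwo hfD hfval hfiber pair_le triple_le hcard3 hkey hmap hinj hfdef hF hR
  omega

/-- For every integer `n ≥ 3`, the semitotal domination number of the cycle `Cₙ` on `n`
vertices equals `⌈2n/5⌉` (written as `(2 * n + 4) / 5` using natural division). -/
theorem semitotalDomNum_cycleGraph (n : ℕ) (hn : 3 ≤ n) :
    semitotalDomNum (SimpleGraph.cycleGraph n) = (2 * n + 4) / 5 := by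
  obtain ⟨m, rfl⟩ : ∃ m, n = m + 3 := ⟨n - 3, by omega⟩
  have hcard : ((Finset.univ : Finset (Fin (m+3))).filter
      (fun i => i.val % 5 = 0 ∨ i.val % 5 = 2)).card = (2 * (m+3) + 4) / 5 := by
    rw [card_fin_filter (m+3) (fun j => j % 5 = 0 ∨ j % 5 = 2), count5]
  apply le_antisymm
  · exact Nat.sInf_le ⟨_, upperD m, hcard⟩
  · refine le_csInf ⟨_, ⟨_, upperD m, hcard⟩⟩ ?_
    rintro k ⟨D, hD, rfl⟩
    have := lowerD m D hD
    omega
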